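/- arXiv:1805.04769 — 2 statements merged into one kernel-verified Lean document; each statement's English description precedes it below -/
import Mathlib

section
/- For an irrational rotation T_α with α > k/l such that k/l is an even-index convergent p_m/q_m of α, the first point of the orbit of x under T_α that belongs to the arc [x, T_α^l(x)] has the form T_α^{Nl - r}(x) with N = a_{m+1} + 2, where r ∈ (0,l) satisfies kr ≡ 1 (mod l). -/
set_option maxHeartbeats 2000000 in
/-- For an irrational rotation `T_α` with `α > k/l`, where `k/l = p_m/q_m` is an
even-index convergent of the continued fraction of `α`, the first point of the
orbit of `x` under `T_α` lying in the (open) arc `(x, T_α^l(x))` is `T_α^{Nl-r}(x)`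
with `N = a_{m+1} + 2`, where `r ∈ (0,l)` satisfies `kr ≡ 1 (mod l)`. Membership
of `x + jα` in the arc is expressed via fractional parts, by translation
invariance: `0 < fract(jα) < fract(lα)`. -/
theorem stmt7 (α : ℝ) (hirr : Irrational α) (h0 : 0 < α) (h1 : α < 1)
    (m : ℕ) (hmeven : Even m) (k l r aN N : ℕ)
    (hl : 0 < l) (hql : ((l : ℝ)) = (GenContFract.of α).dens m)
    (hconv : (GenContFract.of α).convs m = (k : ℝ) / l)
    (hgt : (k : ℝ) / l < α)
    (ha : (GenContFract.of α).partDens.get? m = some (aN : ℝ))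
    (hr : 0 < r) (hrl : r < l) (hmod : (k * r) % l = 1 % l)
    (hN : N = aN + 2) :
    (0 < Int.fract (((N * l - r : ℕ) : ℝ) * α) ∧
      Int.fract (((N * l - r : ℕ) : ℝ) * α) < Int.fract ((l : ℝ) * α)) ∧
    ∀ j : ℕ, 0 < j → j < N * l - r →
      ¬ (0 < Int.fract ((j : ℝ) * α) ∧ Int.fract ((j : ℝ) * α) < Int.fract ((l : ℝ) * α)) := by
  set g := GenContFract.of α with hg
  have lpos : (0:ℝ) < l := by exact_mod_cast hl
  -- basic continued fraction facts
  have hnt : ∀ n, ¬ g.TerminatedAt n := by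
    intro n hterm
    obtain ⟨q, hq⟩ := (GenContFract.terminates_iff_rat α).mp ⟨n, hterm⟩
    exact hirr ⟨q, hq.symm⟩
  have hsome : ∀ n, ∃ z : ℤ, 1 ≤ z ∧ g.s.get? n = some ⟨1, (z:ℝ)⟩ := by
    intro n
    obtain ⟨gp, hgp⟩ := Option.ne_none_iff_exists'.mp
      (fun h => hnt n (GenContFract.terminatedAt_iff_s_none.mpr h))
    obtain ⟨h1', z, hz⟩ := GenContFract.of_partNum_eq_one_and_exists_int_partDen_eq hgp
    have hb1 : (1:ℝ) ≤ gp.b := GenContFract.of_one_le_get?_partDen (GenContFract.partDen_eq_s_b hgp)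
    refine ⟨z, by exact_mod_cast hz ▸ hb1, ?_⟩
    obtain ⟨ga, gb⟩ := gp
    change ga = 1 at h1'
    change gb = (z:ℝ) at hz
    rw [h1', hz] at hgp
    exact hgp
  have hlin : ∀ (a b : ℤ), 0 < b → (b:ℝ) * α ≠ (a:ℝ) := by
    intro a b hb heq
    have hbne : ((b:ℝ)) ≠ 0 := by exact_mod_cast hb.ne'
    exact (irrational_iff_ne_rational α).mp hirr a b hb.ne' (by rw [eq_div_iff hbne]; linarith)
  have hden1 : ∀ n, (1:ℝ) ≤ g.dens n := by
    intro n; induction n with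
    | zero => simp [g.zeroth_den_eq_one]
    | succ n ih => exact ih.trans (GenContFract.of_den_mono (v := α))
  have hint : ∀ n, (∃ a : ℤ, g.nums n = (a:ℝ)) ∧ (∃ b : ℤ, g.dens n = (b:ℝ)) := by
    have H : ∀ n, ((∃ a : ℤ, g.nums n = (a:ℝ)) ∧ (∃ b : ℤ, g.dens n = (b:ℝ))) ∧
        ((∃ a : ℤ, g.nums (n+1) = (a:ℝ)) ∧ (∃ b : ℤ, g.dens (n+1) = (b:ℝ))) := by
      intro n
      induction n with
      | zero =>
        obtain ⟨z, hz1, hzs⟩ := hsome 0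
        refine ⟨⟨⟨⌊α⌋, ?_⟩, ⟨1, by simp [g.zeroth_den_eq_one]⟩⟩,
          ⟨⌊α⌋ * z + 1, ?_⟩, ⟨z, by rw [GenContFract.first_den_eq hzs]⟩⟩
        · rw [g.zeroth_num_eq_h, GenContFract.of_h_eq_floor]
        · rw [GenContFract.first_num_eq hzs, GenContFract.of_h_eq_floor]
          push_cast; ring
      | succ n ih =>
        refine ⟨ih.2, ?_⟩
        obtain ⟨⟨a0, ha0⟩, ⟨b0, hb0⟩⟩ := ih.1
        obtain ⟨⟨a1, ha1⟩, ⟨b1, hb1⟩⟩ := ih.2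
        obtain ⟨z, hz1, hzs⟩ := hsome (n+1)
        exact ⟨⟨z * a1 + a0, by rw [GenContFract.nums_recurrence hzs ha0 ha1]; push_cast; ring⟩,
          ⟨z * b1 + b0, by rw [GenContFract.dens_recurrence hzs hb0 hb1]; push_cast; ring⟩⟩
    exact fun n => (H n).1
  have hdet : ∀ n, g.nums n * g.dens (n+1) - g.dens n * g.nums (n+1) = (-1:ℝ)^(n+1) :=
    fun n => SimpContFract.determinant (s := SimpContFract.of α) (hnt n)
  -- m ≥ 2
  have hm0 : m ≠ 0 := by
    rintro rfl
    rw [g.zeroth_den_eq_one] at hql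
    have : l = 1 := by exact_mod_cast hql
    omega
  obtain ⟨m', rfl⟩ : ∃ m', m = m' + 2 := by
    obtain ⟨c, hc⟩ := hmeven; exact ⟨m - 2, by omega⟩
  -- numerator of convergent m is k
  have hA : g.nums (m' + 2) = (k:ℝ) := by
    have h := g.conv_eq_num_div_den (n := m' + 2)
    rw [hconv, ← hql] at h
    field_simp at h
    linarith
  -- q_{m-1} = l - r
  obtain ⟨b1, hb1⟩ := (hint (m' + 1)).2
  obtain ⟨a1, ha1⟩ := (hint (m' + 1)).1
  have hb1ge : (1:ℤ) ≤ b1 := by exact_mod_cast hb1 ▸ hden1 (m' + 1)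
  obtain ⟨b0, hb0⟩ := (hint m').2
  have hb0ge : (1:ℤ) ≤ b0 := by exact_mod_cast hb0 ▸ hden1 m'
  obtain ⟨zc, hzc1, hzcs⟩ := hsome (m' + 1)
  have hrecm : g.dens (m' + 2) = (zc:ℝ) * b1 + 1 * b0 := by
    simpa using GenContFract.dens_recurrence hzcs hb0 hb1
  have hb1lt : b1 ≤ (l:ℤ) - 1 := by
    have hre : (l:ℝ) = (zc:ℝ) * b1 + b0 := by rw [hql, hrecm]; ring
    have h1' : ((zc:ℝ)) ≥ 1 := by exact_mod_cast hzc1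
    have h2 : ((b1:ℝ)) ≥ 1 := by exact_mod_cast hb1ge
    have h3 : ((b0:ℝ)) ≥ 1 := by exact_mod_cast hb0ge
    have : (b1:ℝ) ≤ (l:ℝ) - 1 := by nlinarith
    exact_mod_cast this
  have hdet1 : a1 * (l:ℤ) - b1 * k = 1 := by
    have h := hdet (m' + 1)
    rw [ha1, hA, ← hql, hb1] at h
    have hpow : ((-1:ℝ))^(m' + 1 + 1) = 1 := by
      have he : Even (m' + 1 + 1) := hmeven
      exact he.neg_one_pow
    rw [hpow] at h
    exact_mod_cast h
  have hkr1 : 1 ≤ k * r := by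
    rcases Nat.eq_zero_or_pos (k * r) with h | h
    · rw [h, Nat.zero_mod, Nat.mod_eq_of_lt (by omega)] at hmod; omega
    · exact h
  have hldvd : ∃ c : ℤ, (k:ℤ) * r - 1 = l * c := by
    obtain ⟨c, hc⟩ := (Nat.modEq_iff_dvd' hkr1).mp hmod.symm
    exact ⟨(c:ℤ), by push_cast [← hc]; omega⟩
  have hb1val : b1 = (l:ℤ) - r := by
    have hcop : IsCoprime ((l:ℤ)) ((k:ℤ)) := ⟨a1, -b1, by linarith [hdet1]⟩
    obtain ⟨c, hc⟩ := hldvd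
    have h2 : (l:ℤ) ∣ (k:ℤ) * (b1 + r) :=
      ⟨a1 + c, by linear_combination (-1:ℤ) * hdet1 + hc⟩
    obtain ⟨c2, hc2⟩ := hcop.dvd_of_dvd_mul_left h2
    have hl2 : (2:ℤ) ≤ l := by exact_mod_cast (by omega : 2 ≤ l)
    have hrz : (1:ℤ) ≤ r := by exact_mod_cast hr
    have hrl' : (r:ℤ) < (l:ℤ) := by exact_mod_cast hrl
    rcases lt_trichotomy c2 1 with hc1 | hc1 | hc1
    · have : c2 ≤ 0 := by omega
      nlinarith
    · rw [hc1, mul_one] at hc2; omega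
    · have : 2 ≤ c2 := by omega
      nlinarith
  have hb1r : g.dens (m' + 1) = (l:ℝ) - r := by
    rw [hb1, hb1val]; push_cast; ring
  -- s.get? at index m = m'+2 is ⟨1, aN⟩
  obtain ⟨gpm, hgpm, hgpmb⟩ := GenContFract.exists_s_b_of_partDen ha
  have hgpma : gpm.a = 1 := (GenContFract.of_partNum_eq_one_and_exists_int_partDen_eq hgpm).1
  have hgpm' : g.s.get? (m' + 2) = some ⟨1, (aN:ℝ)⟩ := by
    obtain ⟨ga, gb⟩ := gpm
    change ga = 1 at hgpma
    change gb = (aN:ℝ) at hgpmb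
    rw [hgpma, hgpmb] at hgpm
    exact hgpm
  -- Q1 = dens (m+1)
  obtain ⟨Q1n, hQ1n_def⟩ : ∃ q : ℕ, q = aN * l + (l - r) := ⟨_, rfl⟩
  have hQ1r : g.dens (m' + 3) = (Q1n:ℝ) := by
    have hrec := GenContFract.dens_recurrence hgpm' hb1r hql.symm
    rw [hrec, hQ1n_def]
    push_cast [Nat.cast_sub hrl.le]
    ring
  have hQ1ge : (1:ℝ) ≤ (Q1n:ℝ) := hQ1r ▸ hden1 (m' + 3)
  have hQ1pos : (0:ℝ) < Q1n := by linarith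
  obtain ⟨p1, hp1⟩ := (hint (m' + 3)).1
  have hdet2 : (l:ℝ) * p1 - (k:ℝ) * Q1n = 1 := by
    have h := hdet (m' + 2)
    rw [hA, ← hql, hp1, hQ1r] at h
    have hpow : ((-1:ℝ))^(m' + 2 + 1) = -1 := by
      have ho : Odd (m' + 2 + 1) := Even.add_one hmeven
      exact ho.neg_one_pow
    rw [hpow] at h
    linarith
  -- s and t
  obtain ⟨s, hs_def⟩ : ∃ s : ℝ, s = (l:ℝ) * α - k := ⟨_, rfl⟩
  obtain ⟨t, ht_def⟩ : ∃ t : ℝ, t = (p1:ℝ) - (Q1n:ℝ) * α := ⟨_, rfl⟩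
  have hs0 : 0 < s := by
    rw [hs_def]
    have := (div_lt_iff₀ lpos).mp hgt
    linarith
  have hkey : (Q1n:ℝ) * s + (l:ℝ) * t = 1 := by
    rw [hs_def, ht_def]; linear_combination hdet2
  have hQs_le : (Q1n:ℝ) * s ≤ 1 := by
    have h := GenContFract.abs_sub_convs_le (v := α) (hnt (m' + 2))
    rw [hconv, ← hql, hQ1r] at h
    have heq : α - (k:ℝ)/l = s / l := by rw [hs_def]; field_simp
    rw [heq, abs_of_pos (div_pos hs0 lpos), div_le_div_iff₀ lpos (by positivity)] at h
    nlinarith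
  have hQs_ne : (Q1n:ℝ) * s ≠ 1 := by
    intro h
    have hQ1n0 : 0 < Q1n := by exact_mod_cast hQ1pos
    apply hlin ((Q1n:ℤ) * k + 1) ((Q1n:ℤ) * l) (by exact_mod_cast Nat.mul_pos hQ1n0 hl)
    rw [hs_def] at h; push_cast; nlinarith
  have ht0 : 0 < t := by
    have : (Q1n:ℝ) * s < 1 := lt_of_le_of_ne hQs_le hQs_ne
    nlinarith
  -- dens (m+2) and t < s
  obtain ⟨d2, hd2⟩ := (hint (m' + 4)).2
  have hd2ge1 : (1:ℝ) ≤ (d2:ℝ) := hd2 ▸ hden1 (m' + 4)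
  have hd2pos : (0:ℝ) < d2 := by linarith
  obtain ⟨z3, hz31, hz3s⟩ := hsome (m' + 3)
  have hd2big : (Q1n:ℝ) + l ≤ (d2:ℝ) := by
    have hrec := GenContFract.dens_recurrence hz3s hql.symm hQ1r
    rw [hd2] at hrec
    have h1' : ((z3:ℝ)) ≥ 1 := by exact_mod_cast hz31
    rw [hrec]; push_cast; nlinarith
  have htd2 : t * d2 < 1 := by
    have h := GenContFract.abs_sub_convs_le (v := α) (hnt (m' + 3))
    rw [g.conv_eq_num_div_den, hp1, hQ1r, hd2] at h
    have heq : α - (p1:ℝ)/Q1n = -(t / Q1n) := by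
      rw [ht_def]; field_simp; ring
    rw [heq, abs_neg, abs_of_pos (div_pos ht0 hQ1pos), div_le_div_iff₀ hQ1pos (by positivity)] at h
    have hle : t * d2 ≤ 1 := by nlinarith
    rcases lt_or_eq_of_le hle with h' | h'
    · exact h'
    · exfalso
      have hQ1n0 : 0 < Q1n := by exact_mod_cast hQ1pos
      have hd2z : (0:ℤ) < d2 := by exact_mod_cast hd2pos
      apply hlin (d2 * p1 - 1) (d2 * (Q1n:ℤ)) (mul_pos hd2z (by exact_mod_cast hQ1n0))
      rw [ht_def] at h'; push_cast; nlinarith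
  have hts : t < s := by
    have h5 : (Q1n:ℝ) * (s * d2) = d2 - (l:ℝ) * (t * d2) := by linear_combination d2 * hkey
    have h6 : (Q1n:ℝ) * (s * d2) > d2 - l := by rw [h5]; nlinarith
    have h7 : s * d2 > 1 := by nlinarith
    nlinarith
  have hs1 : s < 1 := by
    have : (Q1n:ℝ) * s < 1 := lt_of_le_of_ne hQs_le hQs_ne
    nlinarith
  -- fract (l α) = s
  have hfl : Int.fract ((l:ℝ) * α) = s := by
    have heq : (l:ℝ) * α = ((k:ℤ):ℝ) + s := by rw [hs_def]; push_cast; ring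
    rw [heq, Int.fract_intCast_add, Int.fract_eq_self.mpr ⟨hs0.le, hs1⟩]
  -- N*l - r = Q1n + l
  have hj0nat : N * l - r = Q1n + l := by
    subst hN
    rw [hQ1n_def, add_mul]
    have h := hrl
    generalize aN * l = w
    omega
  have hj0cast : ((N * l - r : ℕ):ℝ) = (Q1n:ℝ) + l := by rw [hj0nat]; push_cast; ring
  constructor
  · have heq : ((N * l - r : ℕ):ℝ) * α = ((p1 + k : ℤ):ℝ) + (s - t) := by
      rw [hj0cast, hs_def, ht_def]; push_cast; ring
    rw [heq, Int.fract_intCast_add, Int.fract_eq_self.mpr ⟨by linarith, by linarith⟩, hfl]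
    exact ⟨by linarith, by linarith⟩
  · intro j hj hjlt hmem
    obtain ⟨hf0, hfs⟩ := hmem
    rw [hfl] at hfs
    have hf : Int.fract ((j:ℝ) * α) = (j:ℝ) * α - ⌊(j:ℝ) * α⌋ := rfl
    rw [hf] at hf0 hfs
    obtain ⟨p, hp_def⟩ : ∃ p : ℤ, p = ⌊(j:ℝ) * α⌋ := ⟨_, rfl⟩
    rw [← hp_def] at hf0 hfs
    obtain ⟨x, hx_def⟩ : ∃ x : ℤ, x = (j:ℤ) * p1 - p * Q1n := ⟨_, rfl⟩
    obtain ⟨y, hy_def⟩ : ∃ y : ℤ, y = p * l - (j:ℤ) * k := ⟨_, rfl⟩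
    have hjx : (j:ℝ) = (x:ℝ) * l + (y:ℝ) * Q1n := by
      rw [hx_def, hy_def]; push_cast; linear_combination (-(j:ℝ)) * hdet2
    have hfx : (j:ℝ) * α - p = (x:ℝ) * s - (y:ℝ) * t := by
      rw [hx_def, hy_def, hs_def, ht_def]; push_cast
      linear_combination (-((j:ℝ) * α - (p:ℝ))) * hdet2
    have hjpos : (0:ℝ) < j := by exact_mod_cast hj
    rcases le_or_gt y 0 with hy0 | hy1
    · have hy0' : ((y:ℝ)) ≤ 0 := by exact_mod_cast hy0
      have hyt : (y:ℝ) * t ≤ 0 := mul_nonpos_of_nonpos_of_nonneg hy0' ht0.le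
      have hxr : (x:ℝ) * s < 1 * s := by rw [one_mul]; linarith [hfx]
      have hxlt : (x:ℝ) < 1 := (mul_lt_mul_iff_of_pos_right hs0).mp hxr
      have hxle : ((x:ℝ)) ≤ 0 := by
        have hxi : x < 1 := by exact_mod_cast hxlt
        exact_mod_cast (by omega : x ≤ 0)
      have hxl0 : (x:ℝ) * l ≤ 0 := mul_nonpos_of_nonpos_of_nonneg hxle lpos.le
      have hyq : (y:ℝ) * Q1n ≤ 0 := mul_nonpos_of_nonpos_of_nonneg hy0' hQ1pos.le
      linarith [hjx]
    · have hyr : (1:ℝ) ≤ (y:ℝ) := by exact_mod_cast hy1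
      have hyt : t ≤ (y:ℝ) * t := le_mul_of_one_le_left ht0.le hyr
      have hxs : 0 < (x:ℝ) * s := by linarith [hfx]
      have hx1 : (1:ℝ) ≤ (x:ℝ) := by
        have hx0 : (0:ℝ) < x := by
          by_contra hcon
          push_neg at hcon
          have : (x:ℝ) * s ≤ 0 := mul_nonpos_of_nonpos_of_nonneg hcon hs0.le
          linarith
        have hxi : 0 < x := by exact_mod_cast hx0
        exact_mod_cast (by omega : 1 ≤ x)
      have hxl : (l:ℝ) ≤ (x:ℝ) * l := le_mul_of_one_le_left lpos.le hx1
      have hyq : (Q1n:ℝ) ≤ (y:ℝ) * Q1n := le_mul_of_one_le_left hQ1pos.le hyr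
      have hjlt' : (j:ℝ) < ((N * l - r : ℕ):ℝ) := by exact_mod_cast hjlt
      rw [hj0cast] at hjlt'
      linarith [hjx]
end

section
/- Let f be an orientation-preserving circle homeomorphism with rotation number k/l (irreducible), and suppose the orbit of 0 under f is periodic of period l. Then the points of this orbit are cyclically ordered on the circle like the orbit of 0 under the rotation x ↦ x + k/l; in particular, the closest point of the orbit to the right of 0 is f^r(0), where r is the unique integer with 0 < r < l and kr ≡ 1 (mod l). -/
open Filter

section CircAux

variable {F : ℝ → ℝ}

lemma circ_add_int (hp : ∀ x, F (x + 1) = F x + 1) (m : ℤ) (x : ℝ) :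
    F (x + m) = F x + m := by
  induction m using Int.induction_on with
  | zero => simp
  | succ n ih =>
      have h1 : F (x + (n : ℝ) + 1) = F (x + (n : ℝ)) + 1 := hp _
      push_cast
      rw [← add_assoc, h1]
      push_cast at ih
      rw [ih]; ring
  | pred n ih =>
      have h1 : F (x + (-(n : ℝ) - 1) + 1) = F (x + (-(n : ℝ) - 1)) + 1 := hp _
      have h3 : x + (-(n : ℝ) - 1) + 1 = x + -(n : ℝ) := by ring
      rw [h3] at h1
      push_cast at ih ⊢
      have : F (x + (-(n : ℝ) - 1)) = F (x + -(n : ℝ)) - 1 := by linarith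
      rw [show x + (-(n : ℝ) - 1) = x + (-(n:ℝ)-1) from rfl] at this
      calc F (x + (-(n:ℝ) - 1)) = F (x + -(n:ℝ)) - 1 := this
        _ = F x + -(n:ℝ) - 1 := by rw [ih]
        _ = F x + (-(n:ℝ) - 1) := by ring

lemma circ_iter_add (hp : ∀ x, F (x + 1) = F x + 1) (n : ℕ) (m : ℤ) (x : ℝ) :
    F^[n] (x + m) = F^[n] x + m := by
  induction n generalizing x with
  | zero => simp
  | succ n ih =>
      rw [Function.iterate_succ_apply, Function.iterate_succ_apply,
        circ_add_int hp, ih]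

variable {k l : ℤ}

lemma circ_per (hp : ∀ x, F (x + 1) = F x + 1) (hper : F^[l.toNat] 0 = (k : ℝ))
    (n : ℕ) : F^[n + l.toNat] 0 = F^[n] 0 + k := by
  rw [Function.iterate_add_apply, hper, show ((k:ℝ)) = 0 + (k:ℤ) by push_cast; ring,
    circ_iter_add hp]
  push_cast; ring

lemma circ_per_mul (hp : ∀ x, F (x + 1) = F x + 1) (hper : F^[l.toNat] 0 = (k : ℝ))
    (e n : ℕ) : F^[n + e * l.toNat] 0 = F^[n] 0 + (e : ℝ) * k := by
  induction e with
  | zero => simp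
  | succ e ih =>
      have : n + (e + 1) * l.toNat = (n + e * l.toNat) + l.toNat := by ring
      rw [this, circ_per hp hper, ih]
      push_cast; ring

end CircAux

section CircMaster

variable {F : ℝ → ℝ} {k l : ℤ}

lemma circ_iter_lt (hm : StrictMono F) (hp : ∀ x, F (x + 1) = F x + 1)
    (j e : ℕ) (m : ℤ) (h : F^[j + e] 0 < F^[j] 0 + m) :
    ∀ t : ℕ, 1 ≤ t → F^[j + t * e] 0 < F^[j] 0 + ((t : ℤ) * m : ℤ) := by
  intro t ht
  induction t, ht using Nat.le_induction with
  | base => push_cast; simpa using h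
  | succ t ht ih =>
      have h2 := (hm.iterate e) ih
      rw [circ_iter_add hp] at h2
      rw [← Function.iterate_add_apply, ← Function.iterate_add_apply] at h2
      rw [show e + (j + t * e) = j + (t+1) * e by ring, show e + j = j + e by ring] at h2
      calc F^[j + (t+1)*e] 0 < F^[j + e] 0 + ((t:ℤ) * m : ℤ) := h2
        _ < (F^[j] 0 + m) + ((t:ℤ) * m : ℤ) := by linarith
        _ = F^[j] 0 + (((t:ℕ)+1 : ℤ) * m : ℤ) := by push_cast; ring

lemma circ_iter_gt (hm : StrictMono F) (hp : ∀ x, F (x + 1) = F x + 1)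
    (j e : ℕ) (m : ℤ) (h : F^[j] 0 + m < F^[j + e] 0) :
    ∀ t : ℕ, 1 ≤ t → F^[j] 0 + ((t : ℤ) * m : ℤ) < F^[j + t * e] 0 := by
  intro t ht
  induction t, ht using Nat.le_induction with
  | base => push_cast; simpa using h
  | succ t ht ih =>
      have h2 := (hm.iterate e) ih
      rw [circ_iter_add hp] at h2
      rw [← Function.iterate_add_apply, ← Function.iterate_add_apply] at h2
      rw [show e + (j + t * e) = j + (t+1) * e by ring, show e + j = j + e by ring] at h2
      calc F^[j] 0 + (((t:ℕ)+1 : ℤ) * m : ℤ) = (F^[j] 0 + m) + ((t:ℤ) * m : ℤ) := by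
            push_cast; ring
        _ < F^[j + e] 0 + ((t:ℤ) * m : ℤ) := by linarith
        _ < F^[j + (t+1)*e] 0 := h2

lemma circ_iter_eq (hm : StrictMono F) (hp : ∀ x, F (x + 1) = F x + 1)
    (j e : ℕ) (m : ℤ) (h : F^[j + e] 0 = F^[j] 0 + m) :
    ∀ t : ℕ, F^[j + t * e] 0 = F^[j] 0 + ((t : ℤ) * m : ℤ) := by
  intro t
  induction t with
  | zero => simp
  | succ t ih =>
      have h2 : F^[e] (F^[j + t*e] 0) = F^[e] (F^[j] 0 + ((t:ℤ)*m : ℤ)) := by rw [ih]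
      rw [circ_iter_add hp] at h2
      rw [← Function.iterate_add_apply, ← Function.iterate_add_apply] at h2
      rw [show e + (j + t * e) = j + (t+1) * e by ring, show e + j = j + e by ring] at h2
      rw [h2, h]
      push_cast; ring

variable (hm : StrictMono F) (hp : ∀ x, F (x + 1) = F x + 1)
    (hl : 0 < l) (hper : F^[l.toNat] 0 = (k : ℝ))
include hm hp hl hper

lemma circ_master_lt (j e : ℕ) (m : ℤ) (h : F^[j + e] 0 < F^[j] 0 + m) :
    (e : ℤ) * k < l * m := by
  have hL : 1 ≤ l.toNat := by omega
  have h1 := circ_iter_lt hm hp j e m h l.toNat hL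
  rw [show j + l.toNat * e = j + e * l.toNat by ring, circ_per_mul hp hper] at h1
  have h2 : (e : ℝ) * k < (l.toNat : ℤ) * m := by push_cast at h1 ⊢; linarith
  have h3 : ((e : ℤ) * k : ℝ) < ((l.toNat : ℤ) * m : ℝ) := by push_cast at h2 ⊢; linarith
  have h4 : (e : ℤ) * k < (l.toNat : ℤ) * m := by exact_mod_cast h3
  rwa [Int.toNat_of_nonneg hl.le] at h4

lemma circ_master_gt (j e : ℕ) (m : ℤ) (h : F^[j] 0 + m < F^[j + e] 0) :
    l * m < (e : ℤ) * k := by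
  have hL : 1 ≤ l.toNat := by omega
  have h1 := circ_iter_gt hm hp j e m h l.toNat hL
  rw [show j + l.toNat * e = j + e * l.toNat by ring, circ_per_mul hp hper] at h1
  have h3 : (((l.toNat : ℤ) * m : ℤ) : ℝ) < ((e : ℤ) * k : ℝ) := by push_cast at h1 ⊢; linarith
  have h4 : (l.toNat : ℤ) * m < (e : ℤ) * k := by exact_mod_cast h3
  rwa [Int.toNat_of_nonneg hl.le] at h4

lemma circ_master_eq (j e : ℕ) (m : ℤ) (h : F^[j + e] 0 = F^[j] 0 + m) :
    (e : ℤ) * k = l * m := by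
  have h1 := circ_iter_eq hm hp j e m h l.toNat
  rw [show j + l.toNat * e = j + e * l.toNat by ring, circ_per_mul hp hper] at h1
  have h3 : ((e : ℤ) * k : ℝ) = (((l.toNat : ℤ) * m : ℤ) : ℝ) := by push_cast at h1 ⊢; linarith
  have h4 : (e : ℤ) * k = (l.toNat : ℤ) * m := by exact_mod_cast h3
  rwa [Int.toNat_of_nonneg hl.le] at h4

lemma circ_master (i j : ℕ) (m : ℤ) :
    F^[i] 0 < F^[j] 0 + m ↔ ((i : ℤ) - j) * k < l * m := by
  rcases lt_trichotomy i j with hij | rfl | hij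
  · set e := j - i with he
    have hje : j = i + e := by omega
    have hecast : (e : ℤ) = (j : ℤ) - i := by omega
    constructor
    · intro h
      have h' : F^[i] 0 + (-m : ℤ) < F^[i + e] 0 := by
        rw [← hje]; push_cast; linarith
      have := circ_master_gt hm hp hl hper i e (-m) h'
      rw [hecast] at this; nlinarith [this]
    · intro h
      by_contra hcon
      push_neg at hcon
      rcases eq_or_lt_of_le hcon with heq | hlt
      · have h' : F^[i + e] 0 = F^[i] 0 + (-m : ℤ) := by
          rw [← hje]; push_cast; linarith
        have := circ_master_eq hm hp hl hper i e (-m) h'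
        rw [hecast] at this; nlinarith [this]
      · have h' : F^[i + e] 0 < F^[i] 0 + (-m : ℤ) := by
          rw [← hje]; push_cast; linarith
        have := circ_master_lt hm hp hl hper i e (-m) h'
        rw [hecast] at this; nlinarith [this]
  · simp only [sub_self, zero_mul]
    constructor
    · intro h
      have hm0 : (0 : ℤ) < m := by
        by_contra hc; push_neg at hc
        have : (m : ℝ) ≤ 0 := by exact_mod_cast hc
        linarith
      exact mul_pos hl hm0
    · intro h
      have hm0 : (0 : ℤ) < m := by nlinarith
      have : (0 : ℝ) < m := by exact_mod_cast hm0
      linarith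
  · set e := i - j with he
    have hie : i = j + e := by omega
    have hecast : (e : ℤ) = (i : ℤ) - j := by omega
    constructor
    · intro h
      have h' : F^[j + e] 0 < F^[j] 0 + m := by rw [← hie]; exact h
      have := circ_master_lt hm hp hl hper j e m h'
      rwa [hecast] at this
    · intro h
      by_contra hcon
      push_neg at hcon
      rcases eq_or_lt_of_le hcon with heq | hlt
      · have h' : F^[j + e] 0 = F^[j] 0 + m := by rw [← hie]; linarith
        have := circ_master_eq hm hp hl hper j e m h'
        rw [hecast] at this; linarith
      · have h' : F^[j] 0 + m < F^[j + e] 0 := by rw [← hie]; linarith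
        have := circ_master_gt hm hp hl hper j e m h'
        rw [hecast] at this; linarith

end CircMaster

section CircFract

variable {F : ℝ → ℝ} {k l : ℤ}
variable (hm : StrictMono F) (hp : ∀ x, F (x + 1) = F x + 1)
    (hl : 0 < l) (hper : F^[l.toNat] 0 = (k : ℝ))
include hm hp hl hper

lemma circ_floor (i : ℕ) : ⌊F^[i] 0⌋ = ⌊(i : ℝ) * k / l⌋ := by
  have hlR : (0 : ℝ) < l := by exact_mod_cast hl
  have key : ∀ m : ℤ, F^[i] 0 < m ↔ (i : ℝ) * k / l < m := by
    intro m
    have hmas := circ_master hm hp hl hper i 0 m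
    rw [Function.iterate_zero_apply, zero_add] at hmas
    rw [hmas, div_lt_iff₀ hlR, show ((i : ℤ) - (0:ℕ)) * k = (i:ℤ) * k by push_cast; ring,
      show l * m = m * l by ring, ← @Int.cast_lt ℝ]
    push_cast
    exact Iff.rfl
  have f1 : (i : ℝ) * k / l < ⌊(i : ℝ) * k / l⌋ + 1 := Int.lt_floor_add_one _
  have f3 : F^[i] 0 < ⌊F^[i] 0⌋ + 1 := Int.lt_floor_add_one _
  have a1 : F^[i] 0 < ((⌊(i : ℝ) * k / l⌋ + 1 : ℤ) : ℝ) :=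
    (key _).mpr (by push_cast; linarith)
  have a2 : (i : ℝ) * k / l < ((⌊F^[i] 0⌋ + 1 : ℤ) : ℝ) :=
    (key (⌊F^[i] 0⌋ + 1)).mp (by push_cast; linarith)
  have b1 : ⌊F^[i] 0⌋ < ⌊(i : ℝ) * k / l⌋ + 1 := Int.floor_lt.mpr a1
  have b2 : ⌊(i : ℝ) * k / l⌋ < ⌊F^[i] 0⌋ + 1 := Int.floor_lt.mpr a2
  omega

lemma circ_fract_lt (i j : ℕ) :
    Int.fract (F^[i] 0) < Int.fract (F^[j] 0) ↔
      (i : ℤ) * k - l * ⌊(i : ℝ) * k / l⌋ < (j : ℤ) * k - l * ⌊(j : ℝ) * k / l⌋ := by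
  have hlR : (0 : ℝ) < l := by exact_mod_cast hl
  set Bi := ⌊(i : ℝ) * k / l⌋ with hBi
  set Bj := ⌊(j : ℝ) * k / l⌋ with hBj
  have fi : Int.fract (F^[i] 0) = F^[i] 0 - Bi := by
    rw [Int.fract, circ_floor hm hp hl hper]
  have fj : Int.fract (F^[j] 0) = F^[j] 0 - Bj := by
    rw [Int.fract, circ_floor hm hp hl hper]
  rw [fi, fj]
  have step : F^[i] 0 - Bi < F^[j] 0 - Bj ↔ F^[i] 0 < F^[j] 0 + ((Bi - Bj : ℤ) : ℝ) := by
    push_cast; constructor <;> intro <;> linarith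
  rw [step, circ_master hm hp hl hper i j (Bi - Bj)]
  constructor <;> intro h <;> nlinarith [h]

omit hm hp hper in
lemma circ_fract_rot (i : ℕ) :
    Int.fract ((i : ℝ) * k / l) = (((i : ℤ) * k - l * ⌊(i : ℝ) * k / l⌋ : ℤ) : ℝ) / l := by
  have hlR : (0 : ℝ) < l := by exact_mod_cast hl
  rw [Int.fract]
  push_cast
  field_simp

end CircFract

/-- Let `f` be an orientation-preserving circle homeomorphism (given by a lift
`F`) with rotation number `k/l` (irreducible) whose orbit of `0` is periodic of
period `l` (so `F^l(0) = k`, with the `l` orbit points distinct on the circle).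
Then the orbit points are cyclically ordered as the orbit of `0` under the
rotation `x ↦ x + k/l`; in particular the closest orbit point to the right of
`0` is `f^r(0)`, where `0 < r < l` and `kr ≡ 1 (mod l)`. Positions on the
circle are expressed by fractional parts of lift orbit points. -/
theorem stmt14 (F : ℝ → ℝ) (hc : Continuous F) (hm : StrictMono F)
    (hp : ∀ x, F (x + 1) = F x + 1)
    (k l r : ℤ) (hl : 0 < l) (hk : 0 < k) (hkl : k < l) (hcop : IsCoprime k l)
    (hrot : Tendsto (fun n : ℕ => F^[n] 0 / n) atTop (nhds ((k : ℝ) / l)))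
    (hper : F^[l.toNat] 0 = (k : ℝ))
    (hdistinct : ∀ j : ℕ, 0 < j → j < l.toNat → Int.fract (F^[j] 0) ≠ 0)
    (hr : 0 < r) (hrl : r < l) (hmod : k * r ≡ 1 [ZMOD l]) :
    (∀ i j : ℕ, i < l.toNat → j < l.toNat →
        (Int.fract (F^[i] 0) < Int.fract (F^[j] 0) ↔
          Int.fract ((i : ℝ) * k / l) < Int.fract ((j : ℝ) * k / l))) ∧
    (∀ j : ℕ, 0 < j → j < l.toNat → (j : ℤ) ≠ r →
        Int.fract (F^[r.toNat] 0) < Int.fract (F^[j] 0)) := by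
  have hlR : (0 : ℝ) < l := by exact_mod_cast hl
  -- the "residue" of the n-th orbit point
  set R : ℕ → ℤ := fun n => (n : ℤ) * k - l * ⌊(n : ℝ) * k / l⌋ with hR
  have hfract : ∀ i j : ℕ,
      (Int.fract (F^[i] 0) < Int.fract (F^[j] 0) ↔ R i < R j) := fun i j =>
    circ_fract_lt hm hp hl hper i j
  have hrot' : ∀ n : ℕ, Int.fract ((n : ℝ) * k / l) = ((R n : ℤ) : ℝ) / l := fun n =>
    circ_fract_rot hl n
  have hbounds : ∀ n : ℕ, 0 ≤ R n ∧ R n < l := by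
    intro n
    have f1 : (⌊(n : ℝ) * k / l⌋ : ℝ) ≤ (n : ℝ) * k / l := Int.floor_le _
    have f2 : (n : ℝ) * k / l < ⌊(n : ℝ) * k / l⌋ + 1 := Int.lt_floor_add_one _
    have g1 : (l : ℝ) * ⌊(n : ℝ) * k / l⌋ ≤ (n : ℝ) * k := by
      rw [le_div_iff₀ hlR] at f1; linarith
    have g2 : (n : ℝ) * k < (l : ℝ) * ⌊(n : ℝ) * k / l⌋ + l := by
      rw [div_lt_iff₀ hlR] at f2; nlinarith
    constructor
    · have : ((0 : ℤ) : ℝ) ≤ ((R n : ℤ) : ℝ) := by simp only [hR]; push_cast; linarith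
      exact_mod_cast this
    · have : ((R n : ℤ) : ℝ) < ((l : ℤ) : ℝ) := by simp only [hR]; push_cast; linarith
      exact_mod_cast this
  have hdvd : ∀ n : ℕ, l ∣ (n : ℤ) * k - R n := by
    intro n
    exact ⟨⌊(n : ℝ) * k / l⌋, by simp only [hR]; ring⟩
  have hl2 : 2 ≤ l := by omega
  have hmodr : l ∣ k * r - 1 := by
    obtain ⟨c, hc⟩ := Int.ModEq.dvd hmod
    exact ⟨-c, by rw [mul_neg, ← hc]; ring⟩
  have hRr : R r.toNat = 1 := by
    have hrt : ((r.toNat : ℕ) : ℤ) = r := Int.toNat_of_nonneg hr.le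
    have h1 : l ∣ R r.toNat - 1 := by
      have h2 : l ∣ (r.toNat : ℤ) * k - R r.toNat := hdvd r.toNat
      rw [hrt] at h2
      have h3 : R r.toNat - 1 = (k * r - 1) - (r * k - R r.toNat) := by ring
      rw [h3]
      exact dvd_sub hmodr h2
    have hb := hbounds r.toNat
    have : R r.toNat - 1 = 0 := by
      refine Int.eq_zero_of_abs_lt_dvd h1 ?_
      rcases abs_cases (R r.toNat - 1) with ⟨h, _⟩ | ⟨h, _⟩ <;> omega
    omega
  have hcop' : IsCoprime l k := hcop.symm
  refine ⟨fun i j hi hj => ?_, fun j hj0 hjl hjr => ?_⟩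
  · rw [hfract i j, hrot' i, hrot' j, div_lt_div_iff_of_pos_right hlR, Int.cast_lt]
  · rw [hfract, hRr]
    have hjZ : (0 : ℤ) < (j : ℤ) ∧ (j : ℤ) < l := by omega
    have hb := hbounds j
    have hRj0 : R j ≠ 0 := by
      intro h0
      have : l ∣ (j : ℤ) * k := by have := hdvd j; rw [h0] at this; simpa using this
      have : l ∣ (j : ℤ) := hcop'.dvd_of_dvd_mul_right this
      have := Int.le_of_dvd hjZ.1 this
      omega
    have hRj1 : R j ≠ 1 := by
      intro h1
      have h2 : l ∣ (j : ℤ) * k - 1 := by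
        have := hdvd j; rw [h1] at this; simpa using this
      have h3 : l ∣ ((j : ℤ) - r) * k := by
        have : ((j : ℤ) - r) * k = ((j : ℤ) * k - 1) - (k * r - 1) := by ring
        rw [this]
        exact dvd_sub h2 hmodr
      have h4 : l ∣ ((j : ℤ) - r) := hcop'.dvd_of_dvd_mul_right h3
      have : (j : ℤ) - r = 0 := by
        refine Int.eq_zero_of_abs_lt_dvd h4 ?_
        rcases abs_cases ((j : ℤ) - r) with ⟨h, _⟩ | ⟨h, _⟩ <;> omega
      exact hjr (by omega)
    omega
end
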